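/- Given a strict total order ≪ on consensus objects and the property that whenever a process enters object c all objects ≪-smaller than c are decided, if two operations op (associated consensus c) and op' (associated consensus c') satisfy op <_h op' in real time, then c' ≪ c is impossible. -/
import Mathlib

/-- Given a strict total order r on consensus objects such that whenever a
process runs on an object all r-smaller objects are decided, and each
operation witnesses its own associated consensus undecided at some time in
its interval (decisions being stable), if op real-time-precedes op' then
assoc op' ≪ assoc op is impossible. -/
theorem stmt19 {Op C : Type} (assoc : Op → C) (r : C → C → Prop)
    (hto : IsStrictTotalOrder C r)
    (inv resp witness : Op → ℕ) (decidedAt : C → ℕ → Prop)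
    (hint : ∀ a, inv a ≤ witness a ∧ witness a ≤ resp a)
    -- each operation witnesses its consensus undecided during its interval
    (hwit : ∀ a, ¬ decidedAt (assoc a) (witness a))
    -- decisions are monotone (stable)
    (hmono : ∀ c t t', decidedAt c t → t ≤ t' → decidedAt c t')
    -- entering an object requires all r-smaller objects to be decided
    (hsmaller : ∀ a c, r c (assoc a) → decidedAt c (witness a)) :
    ∀ op op', resp op < inv op' → ¬ r (assoc op') (assoc op) := by
  intro op op' hlt hr
  exact hwit op' (hmono _ _ _ (hsmaller op _ hr)
    (le_trans (hint op).2 (le_trans hlt.le (hint op').1)))
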